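/- (Verlinde formula) For every natural number n ≥ 1, ∑_{k=1}^{n} 1/sin²(kπ/(2n+1)) = (2/3)·n·(n+1). -/

import Mathlib

open Real Finset

private lemma sum_mul_geom {N : ℕ} {x : ℂ} (hxN : x ^ N = 1) (hx : x ≠ 1) :
    (∑ j ∈ Finset.range N, (j : ℂ) * x ^ j) * (x - 1) = N := by
  have hg : ∑ j ∈ Finset.range N, x ^ j = 0 := by
    rw [geom_sum_eq hx, hxN, sub_self, zero_div]
  calc (∑ j ∈ Finset.range N, (j : ℂ) * x ^ j) * (x - 1)
      = ∑ j ∈ Finset.range N,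
        ((((j+1 : ℕ) : ℂ) * x ^ (j+1) - (j : ℂ) * x ^ j) - x ^ j * x) := by
        rw [Finset.sum_mul]
        refine Finset.sum_congr rfl fun j _ => ?_
        push_cast; ring
    _ = (∑ j ∈ Finset.range N, (((j+1 : ℕ) : ℂ) * x ^ (j+1) - (j : ℂ) * x ^ j))
        - (∑ j ∈ Finset.range N, x ^ j) * x := by
        rw [Finset.sum_sub_distrib, Finset.sum_mul]
    _ = (N : ℂ) * x ^ N - 0 := by
        rw [Finset.sum_range_sub (fun j => (j : ℂ) * x ^ j), hg]
        simp
    _ = N := by rw [hxN]; ring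

private lemma gauss1 (m : ℕ) : ∑ j ∈ Finset.range m, (j : ℂ) = m * (m - 1) / 2 := by
  induction m with
  | zero => simp
  | succ p ih => rw [Finset.sum_range_succ, ih]; push_cast; ring

private lemma gauss2 (m : ℕ) : ∑ j ∈ Finset.range m, (j : ℂ)^2 = m * (m - 1) * (2*m - 1) / 6 := by
  induction m with
  | zero => simp
  | succ p ih => rw [Finset.sum_range_succ, ih]; push_cast; ring

private lemma sum_Icc_pow {N : ℕ} (hN : 1 ≤ N) {η : ℂ} (hη : η ^ N = 1) :
    ∑ k ∈ Finset.Icc 1 (N-1), η ^ k = if η = 1 then (N : ℂ) - 1 else -1 := by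
  have hrange : ∑ k ∈ Finset.range N, η ^ k = 1 + ∑ k ∈ Finset.Icc 1 (N-1), η ^ k := by
    have h : Finset.range N = insert 0 (Finset.Icc 1 (N-1)) := by
      ext k; simp only [Finset.mem_range, Finset.mem_insert, Finset.mem_Icc]; omega
    rw [h, Finset.sum_insert (by simp)]
    simp
  split_ifs with h
  · subst h
    simp only [one_pow, Finset.sum_const, nsmul_eq_mul, mul_one, Nat.card_Icc]
    have : N - 1 + 1 - 1 = N - 1 := by omega
    rw [this]
    push_cast [Nat.cast_sub hN]
    ring
  · have hg : ∑ k ∈ Finset.range N, η ^ k = 0 := by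
      rw [geom_sum_eq h, hη, sub_self, zero_div]
    rw [hg] at hrange
    linear_combination -hrange

/-- Verlinde formula (Proposition 5.1): `∑_{k=1}^{n} 1/sin²(kπ/(2n+1)) = (2/3)n(n+1)`. -/
theorem verlinde_formula (n : ℕ) (hn : 1 ≤ n) :
    ∑ k ∈ Finset.Icc 1 n, 1 / Real.sin (k * π / (2 * n + 1)) ^ 2 =
      2 / 3 * (n : ℝ) * ((n : ℝ) + 1) := by
  set N : ℕ := 2*n+1 with hN
  have hN1 : 1 ≤ N := by omega
  have hNC : (N:ℂ) ≠ 0 := Nat.cast_ne_zero.mpr (by omega)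
  set ζ : ℂ := Complex.exp (2*π*Complex.I/N) with hζ
  have hprim : IsPrimitiveRoot ζ N := Complex.isPrimitiveRoot_exp N (by omega)
  have hζN : ζ ^ N = 1 := hprim.pow_eq_one
  -- Step 1: 4 sin²(kπ/N) = (1 - ζ^k)(1 - ζ^(N-k))
  have hsin : ∀ k ∈ Finset.Icc 1 (2*n),
      (1 - ζ^k) * (1 - ζ^(N-k)) = 4 * Complex.sin (k*π/N)^2 := by
    intro k hk
    simp only [Finset.mem_Icc] at hk
    have hkN : k ≤ N := by omega
    set z : ℂ := (k:ℂ)*π/N with hz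
    have e1 : ζ^k = Complex.exp (z*Complex.I) * Complex.exp (z*Complex.I) := by
      rw [hζ, ← Complex.exp_nat_mul, ← Complex.exp_add]
      congr 1
      rw [hz]
      field_simp
      ring
    have e2 : ζ^(N-k) = Complex.exp (-(z*Complex.I)) * Complex.exp (-(z*Complex.I)) := by
      rw [hζ, ← Complex.exp_nat_mul, ← Complex.exp_add]
      have hc : ((N - k : ℕ) : ℂ) = (N:ℂ) - k := by push_cast [hkN]; ring
      rw [hc, show ((N:ℂ) - k) * (2*π*Complex.I/N) = 2*π*Complex.I + (-(z*Complex.I) + -(z*Complex.I)) from by rw [hz]; field_simp; ring,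
        Complex.exp_add, Complex.exp_two_pi_mul_I, one_mul]
    rw [e1, e2, Complex.sin]
    set u := Complex.exp (z*Complex.I)
    set v := Complex.exp (-z*Complex.I) with hv
    have hv' : Complex.exp (-(z*Complex.I)) = v := by rw [hv]; congr 1; ring
    rw [hv']
    have huv : u * v = 1 := by
      rw [hv, ← Complex.exp_add]
      simp [show z*Complex.I + -z*Complex.I = 0 from by ring]
    have hI : (Complex.I)^2 = -1 := Complex.I_sq
    linear_combination (u*v - 1) * huv + (-(v - u)^2) * hI
  -- Step 2: geometric-sum expansion of the reciprocals
  set A : ℕ → ℂ := fun k => ∑ j ∈ Finset.range N, (j:ℂ) * (ζ^k)^j with hA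
  set B : ℕ → ℂ := fun k => ∑ l ∈ Finset.range N, (l:ℂ) * (ζ^(N-k))^l with hB
  have hABk : ∀ k ∈ Finset.Icc 1 (2*n),
      (4 * Complex.sin (k*π/N)^2) * (A k * B k) = (N:ℂ)^2 := by
    intro k hk
    rw [← hsin k hk]
    simp only [Finset.mem_Icc] at hk
    have hx1 : ζ^k ≠ 1 := hprim.pow_ne_one_of_pos_of_lt (by omega) (by omega)
    have hx1' : ζ^(N-k) ≠ 1 := hprim.pow_ne_one_of_pos_of_lt (by omega) (by omega)
    have hxN : (ζ^k)^N = 1 := by rw [← pow_mul, mul_comm, pow_mul, hζN, one_pow]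
    have hxN' : (ζ^(N-k))^N = 1 := by rw [← pow_mul, mul_comm, pow_mul, hζN, one_pow]
    have h1 := sum_mul_geom hxN hx1
    have h2 := sum_mul_geom hxN' hx1'
    calc (1 - ζ^k) * (1 - ζ^(N-k)) * (A k * B k)
        = (A k * (ζ^k - 1)) * (B k * (ζ^(N-k) - 1)) := by ring
      _ = (N:ℂ) * N := by rw [hA, hB]; rw [h1, h2]
      _ = (N:ℂ)^2 := by ring
  have hterm : ∀ k ∈ Finset.Icc 1 (2*n),
      1 / Complex.sin (k*π/N)^2 = 4 * (A k * B k) / (N:ℂ)^2 := by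
    intro k hk
    have h := hABk k hk
    have hs : Complex.sin (k*π/N)^2 ≠ 0 := by
      intro h0
      rw [h0, mul_zero, zero_mul] at h
      exact pow_ne_zero 2 hNC h.symm
    rw [div_eq_div_iff hs (pow_ne_zero 2 hNC)]
    linear_combination -h
  -- Step 3: expand A k * B k as a double sum
  have hABexp : ∀ k ∈ Finset.Icc 1 (2*n), A k * B k
      = ∑ j ∈ Finset.range N, ∑ l ∈ Finset.range N,
          (j:ℂ) * (l:ℂ) * (ζ^(j+(N-l)))^k := by
    intro k hk
    simp only [Finset.mem_Icc] at hk
    have hkN : k ≤ N := by omega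
    rw [hA, hB, Finset.sum_mul_sum]
    refine Finset.sum_congr rfl fun j hj => Finset.sum_congr rfl fun l hl => ?_
    simp only [Finset.mem_range] at hj hl
    have hlN : l ≤ N := by omega
    have hmod : (k*j + (N-k)*l) % N = ((j+(N-l))*k) % N := by
      have key : k*j + (N-k)*l + N*k = (j+(N-l))*k + N*l := by
        zify [hkN, hlN]; ring
      conv_lhs => rw [← Nat.add_mul_mod_self_left (k*j + (N-k)*l) N k]
      conv_rhs => rw [← Nat.add_mul_mod_self_left ((j+(N-l))*k) N l]
      rw [key]
    have hpow : ζ^(k*j) * ζ^((N-k)*l) = ζ^((j+(N-l))*k) := by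
      rw [← pow_add, pow_eq_pow_mod (k*j + (N-k)*l) hζN,
        pow_eq_pow_mod ((j+(N-l))*k) hζN, hmod]
    calc (j:ℂ) * (ζ^k)^j * ((l:ℂ) * (ζ^(N-k))^l)
        = (j:ℂ) * (l:ℂ) * (ζ^(k*j) * ζ^((N-k)*l)) := by
          rw [← pow_mul, ← pow_mul]; ring
      _ = (j:ℂ) * (l:ℂ) * (ζ^((j+(N-l))*k)) := by rw [hpow]
      _ = (j:ℂ) * (l:ℂ) * (ζ^(j+(N-l)))^k := by rw [pow_mul]
  -- Step 4: swap the order of summation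
  have hswap : ∑ k ∈ Finset.Icc 1 (2*n), A k * B k
      = ∑ j ∈ Finset.range N, ∑ l ∈ Finset.range N,
          (j:ℂ) * (l:ℂ) * (∑ k ∈ Finset.Icc 1 (2*n), (ζ^(j+(N-l)))^k) := by
    rw [Finset.sum_congr rfl hABexp, Finset.sum_comm]
    refine Finset.sum_congr rfl fun j _ => ?_
    rw [Finset.sum_comm]
    refine Finset.sum_congr rfl fun l _ => ?_
    rw [Finset.mul_sum]
  -- Step 5: evaluate the inner geometric sum
  have hinner : ∀ j ∈ Finset.range N, ∀ l ∈ Finset.range N,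
      (∑ k ∈ Finset.Icc 1 (2*n), (ζ^(j+(N-l)))^k) = if j = l then (N:ℂ) - 1 else -1 := by
    intro j hj l hl
    simp only [Finset.mem_range] at hj hl
    have hηN : (ζ^(j+(N-l)))^N = 1 := by rw [← pow_mul, mul_comm, pow_mul, hζN, one_pow]
    have h2n : 2*n = N - 1 := by omega
    rw [h2n, sum_Icc_pow hN1 hηN]
    congr 1
    rw [hprim.pow_eq_one_iff_dvd]
    simp only [eq_iff_iff]
    constructor
    · intro hdvd
      have h0 : j + (N - l) ≠ 0 := by omega
      have h2 : j + (N - l) < 2*N := by omega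
      have := Nat.eq_of_dvd_of_lt_two_mul h0 hdvd h2
      omega
    · intro h; subst h; exact ⟨1, by omega⟩
  -- Step 6: evaluate the double sum
  have hdouble : ∑ j ∈ Finset.range N, ∑ l ∈ Finset.range N,
      (j:ℂ) * (l:ℂ) * (if j = l then (N:ℂ) - 1 else -1)
      = (N:ℂ) * (∑ j ∈ Finset.range N, (j:ℂ)^2)
        - (∑ j ∈ Finset.range N, (j:ℂ)) * (∑ j ∈ Finset.range N, (j:ℂ)) := by
    have hrow : ∀ j ∈ Finset.range N,
        (∑ l ∈ Finset.range N, (j:ℂ) * (l:ℂ) * (if j = l then (N:ℂ) - 1 else -1))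
        = (N:ℂ) * (j:ℂ)^2 - (j:ℂ) * (∑ l ∈ Finset.range N, (l:ℂ)) := by
      intro j hj
      have hterm' : ∀ l : ℕ, (j:ℂ) * (l:ℂ) * (if j = l then (N:ℂ) - 1 else -1)
          = (if j = l then (N:ℂ) * j * l else 0) - (j:ℂ) * (l:ℂ) := by
        intro l
        split_ifs with h
        · ring
        · ring
      rw [Finset.sum_congr rfl fun l _ => hterm' l, Finset.sum_sub_distrib,
        Finset.sum_ite_eq (Finset.range N) j (fun l => (N:ℂ) * j * l), if_pos hj,
        ← Finset.mul_sum]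
      ring
    rw [Finset.sum_congr rfl hrow, Finset.sum_sub_distrib, ← Finset.mul_sum,
      ← Finset.sum_mul]
  -- Step 7: the total complex sum
  have hAB : ∑ k ∈ Finset.Icc 1 (2*n), A k * B k
      = (N:ℂ) * ((N:ℂ) * ((N:ℂ) - 1) * (2*(N:ℂ) - 1) / 6)
        - ((N:ℂ) * ((N:ℂ) - 1) / 2) * ((N:ℂ) * ((N:ℂ) - 1) / 2) := by
    rw [hswap,
      Finset.sum_congr rfl fun j hj => Finset.sum_congr rfl fun l hl => by rw [hinner j hj l hl],
      hdouble, gauss1, gauss2]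
  have htotC : ∑ k ∈ Finset.Icc 1 (2*n), 1 / Complex.sin ((k:ℂ)*(π:ℂ)/(N:ℂ))^2
      = ((N:ℂ)^2 - 1)/3 := by
    rw [Finset.sum_congr rfl hterm]
    rw [← Finset.sum_div, ← Finset.mul_sum, hAB]
    field_simp
    ring
  -- Step 8: transfer to ℝ
  set f : ℕ → ℝ := fun k => 1 / Real.sin (k * π / (2 * (n:ℝ) + 1)) ^ 2 with hf
  have hcast : ((∑ k ∈ Finset.Icc 1 (2*n), f k : ℝ) : ℂ)
      = ∑ k ∈ Finset.Icc 1 (2*n), 1 / Complex.sin ((k:ℂ)*(π:ℂ)/(N:ℂ))^2 := by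
    rw [hf, hN]
    push_cast [Complex.ofReal_sin]
    rfl
  have hreal : ∑ k ∈ Finset.Icc 1 (2*n), f k = ((2*(n:ℝ)+1)^2 - 1)/3 := by
    apply Complex.ofReal_injective
    rw [hcast, htotC, hN]
    push_cast
    ring
  -- Step 9: fold the sum using the symmetry sin(π - x) = sin x
  have hrefl : ∑ k ∈ Finset.Icc (n+1) (2*n), f k = ∑ k ∈ Finset.Icc 1 n, f k := by
    refine Finset.sum_nbij' (i := fun k => 2*n+1-k) (j := fun k => 2*n+1-k) ?_ ?_ ?_ ?_ ?_
    · intro a ha; simp only [Finset.mem_Icc] at *; omega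
    · intro a ha; simp only [Finset.mem_Icc] at *; omega
    · intro a ha; simp only [Finset.mem_Icc] at ha; omega
    · intro a ha; simp only [Finset.mem_Icc] at ha; omega
    · intro a ha
      simp only [Finset.mem_Icc] at ha
      simp only [hf]
      have hc : ((2*n+1-a : ℕ) : ℝ) = 2*(n:ℝ)+1 - a := by push_cast [show a ≤ 2*n+1 by omega]; ring
      have hpos : (2*(n:ℝ)+1) ≠ 0 := by positivity
      rw [hc, show (2*(n:ℝ)+1 - a) * π / (2*(n:ℝ)+1) = π - a * π / (2*(n:ℝ)+1) from by field_simp,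
        Real.sin_pi_sub]
  have hsplit : ∑ k ∈ Finset.Icc 1 (2*n), f k
      = ∑ k ∈ Finset.Icc 1 n, f k + ∑ k ∈ Finset.Icc (n+1) (2*n), f k := by
    rw [show Finset.Icc 1 (2*n) = Finset.Ioc 0 (2*n) from Finset.Icc_add_one_left_eq_Ioc _ _,
      show Finset.Icc 1 n = Finset.Ioc 0 n from Finset.Icc_add_one_left_eq_Ioc _ _,
      show Finset.Icc (n+1) (2*n) = Finset.Ioc n (2*n) from by rw [← Finset.Icc_add_one_left_eq_Ioc]]
    exact (Finset.sum_Ioc_consecutive f (Nat.zero_le n) (by omega)).symm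
  show ∑ k ∈ Finset.Icc 1 n, f k = 2 / 3 * (n : ℝ) * ((n : ℝ) + 1)
  rw [hrefl] at hsplit
  rw [hreal] at hsplit
  linear_combination -0.5 * hsplit
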